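/- Support and ordering stability for the squared-variable map: let x, x* ∈ ℝ^r (functions Fin r → ℝ) and suppose that (a) for all indices i, j with (x*_i)² ≠ (x*_j)², one has ‖x⊙x − x*⊙x*‖₂ ≤ |(x*_i)² − (x*_j)²|/2, and (b) for every index i with x*_i ≠ 0, one has ‖x⊙x − x*⊙x*‖₂ ≤ (x*_i)²/2. Then the number of nonzero entries of x is at least the number of nonzero entries of x*, and there exists a permutation π of Fin r such that both sequences i ↦ (x_{π(i)})² and i ↦ (x*_{π(i)})² are nonincreasing (antitone with respect to the order on Fin r). -/

import Mathlib

/-- Support and ordering stability for the squared-variable map `x ↦ x ⊙ x`. Here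
`Real.sqrt (∑ k, (x k * x k - xs k * xs k)^2)` is the Euclidean norm `‖x⊙x − x*⊙x*‖₂`. -/
theorem squared_variable_support_and_ordering {r : ℕ} (x xs : Fin r → ℝ)
    (ha : ∀ i j : Fin r, (xs i) ^ 2 ≠ (xs j) ^ 2 →
      Real.sqrt (∑ k, (x k * x k - xs k * xs k) ^ 2) ≤ |(xs i) ^ 2 - (xs j) ^ 2| / 2)
    (hb : ∀ i : Fin r, xs i ≠ 0 →
      Real.sqrt (∑ k, (x k * x k - xs k * xs k) ^ 2) ≤ (xs i) ^ 2 / 2) :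
    (Finset.univ.filter fun i : Fin r => xs i ≠ 0).card ≤
        (Finset.univ.filter fun i : Fin r => x i ≠ 0).card ∧
      ∃ π : Equiv.Perm (Fin r),
        (Antitone fun i : Fin r => (x (π i)) ^ 2) ∧
        (Antitone fun i : Fin r => (xs (π i)) ^ 2) := by
  set N := Real.sqrt (∑ k, (x k * x k - xs k * xs k) ^ 2) with hN
  have hL : ∀ k : Fin r, |x k ^ 2 - xs k ^ 2| ≤ N := by
    intro k
    have h1 : (x k * x k - xs k * xs k) ^ 2 ≤ ∑ k, (x k * x k - xs k * xs k) ^ 2 :=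
      Finset.single_le_sum (f := fun k => (x k * x k - xs k * xs k) ^ 2)
        (fun i _ => sq_nonneg _) (Finset.mem_univ k)
    have h2 : Real.sqrt ((x k * x k - xs k * xs k) ^ 2) ≤ N :=
      Real.sqrt_le_sqrt h1
    rw [Real.sqrt_sq_eq_abs] at h2
    have : x k ^ 2 - xs k ^ 2 = x k * x k - xs k * xs k := by ring
    rw [this]; exact h2
  have key : ∀ i j : Fin r, xs j ^ 2 < xs i ^ 2 → x j ^ 2 ≤ x i ^ 2 := by
    intro i j hlt
    have hne : xs i ^ 2 ≠ xs j ^ 2 := ne_of_gt hlt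
    have h := ha i j hne
    rw [abs_of_pos (by linarith)] at h
    have hi := abs_le.mp (hL i)
    have hj := abs_le.mp (hL j)
    linarith [hi.1, hj.2]
  constructor
  · apply Finset.card_le_card
    intro i hi
    simp only [Finset.mem_filter, Finset.mem_univ, true_and] at hi ⊢
    have h := hb i hi
    have hpos : 0 < xs i ^ 2 := by positivity
    have hi2 := (abs_le.mp (hL i)).1
    intro hx
    rw [hx] at hi2
    simp at hi2
    linarith
  · set g : Fin r → ℝ ×ₗ ℝ := fun i => toLex (-(xs i) ^ 2, -(x i) ^ 2) with hg
    set σ := Tuple.sort g with hσ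
    have hmain : ∀ i j : Fin r, i ≤ j →
        -(xs (σ i)) ^ 2 < -(xs (σ j)) ^ 2 ∨
          (-(xs (σ i)) ^ 2 = -(xs (σ j)) ^ 2 ∧ -(x (σ i)) ^ 2 ≤ -(x (σ j)) ^ 2) := by
      intro i j hij
      have hm := Tuple.monotone_sort g hij
      have hm' : g (σ i) ≤ g (σ j) := hm
      rw [hg] at hm'
      exact Prod.Lex.le_iff.mp hm'
    refine ⟨σ, ?_, ?_⟩
    · intro i j hij
      simp only
      rcases hmain i j hij with h | ⟨h1, h2⟩
      · exact key _ _ (by linarith)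
      · linarith
    · intro i j hij
      simp only
      rcases hmain i j hij with h | ⟨h1, h2⟩
      · linarith
      · linarith
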